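/- Sufficiency direction of Theorem 1 (weak learnability follows from a large robust margin): Let τ > 0 and suppose there exists a probability measure Q on Θ with marginrob(Q, S) ≥ τ; equivalently, for every (x, y) ∈ S, every δ ∈ B(ε) and every y' ≠ y one has Q({θ : c θ (x+δ) = y}) − Q({θ : c θ (x+δ) = y'}) ≥ τ. Then the margin weak-learning condition holds with constant τ: for every probability measure P' on S̃_aug × B(ε) there exists θ ∈ Θ such that E_{(x,y,y',δ)∼P'}[1[c θ (x+δ) = y]] ≥ E_{(x,y,y',δ)∼P'}[1[c θ (x+δ) = y']] + τ. -/

import Mathlib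

set_option maxHeartbeats 1000000
set_option synthInstance.maxHeartbeats 100000


open MeasureTheory

/-- Sufficiency direction of Theorem 1: a robust margin of at least `τ` for some ensemble
distribution `Q` implies the margin weak-learning condition with constant `τ`. -/
theorem margin_weak_learning_of_robust_margin
    (d K : ℕ) (hd : 1 ≤ d) (hK : 2 ≤ K)
    (S : Finset ((Fin d → ℝ) × Fin K)) (hS : S.Nonempty)
    (B : Set (Fin d → ℝ)) (hB : B.Nonempty) (hBmeas : MeasurableSet B)
    (Θ : Type*) [MeasurableSpace Θ]
    (c : Θ → (Fin d → ℝ) → Fin K)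
    (hc : ∀ (x : Fin d → ℝ) (j : Fin K),
      MeasurableSet {p : Θ × (Fin d → ℝ) | c p.1 (x + p.2) = j})
    (τ : ℝ) (hτ : 0 < τ)
    (Q : Measure Θ) [IsProbabilityMeasure Q]
    (hQ : ∀ p ∈ S, ∀ δ ∈ B, ∀ y' : Fin K, y' ≠ p.2 →
      (Q {θ | c θ (p.1 + δ) = p.2}).toReal - (Q {θ | c θ (p.1 + δ) = y'}).toReal ≥ τ) :
    ∀ P' : Measure (((Fin d → ℝ) × Fin K) × Fin K × (Fin d → ℝ)),
      IsProbabilityMeasure P' →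
      P' {q | q.1 ∈ S ∧ q.2.1 ≠ q.1.2 ∧ q.2.2 ∈ B} = 1 →
      ∃ θ : Θ, (P' {q | c θ (q.1.1 + q.2.2) = q.1.2}).toReal ≥
        (P' {q | c θ (q.1.1 + q.2.2) = q.2.1}).toReal + τ := by
  intro P' hP' hsupp
  classical
  -- index set of triples (x, y, y')
  set T : Finset (((Fin d → ℝ) × Fin K) × Fin K) :=
    (S ×ˢ Finset.univ).filter (fun t => t.2 ≠ t.1.2) with hT
  have hTmem : ∀ t ∈ T, t.1 ∈ S ∧ t.2 ≠ t.1.2 := by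
    intro t ht
    rw [hT, Finset.mem_filter, Finset.mem_product] at ht
    exact ⟨ht.1.1, ht.2⟩
  -- cells
  set Cell : (((Fin d → ℝ) × Fin K) × Fin K) → Set (((Fin d → ℝ) × Fin K) × Fin K × (Fin d → ℝ)) :=
    fun t => {q | q.1 = t.1 ∧ q.2.1 = t.2 ∧ q.2.2 ∈ B} with hCelldef
  have hproj : Measurable (fun q : (((Fin d → ℝ) × Fin K) × Fin K × (Fin d → ℝ)) => q.2.2) := measurable_snd.snd
  have hCellmeas : ∀ t, MeasurableSet (Cell t) := by
    intro t
    have : Cell t = (Prod.fst ⁻¹' {t.1}) ∩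
        ((fun q : (((Fin d → ℝ) × Fin K) × Fin K × (Fin d → ℝ)) => q.2.1) ⁻¹' {t.2} ∩ (fun q : (((Fin d → ℝ) × Fin K) × Fin K × (Fin d → ℝ)) => q.2.2) ⁻¹' B) := by
      ext q; simp [hCelldef, and_assoc]
    rw [this]
    exact (measurable_fst (measurableSet_singleton _)).inter
      ((measurable_snd.fst (measurableSet_singleton _)).inter (hproj hBmeas))
  -- support
  set Supp : Set (((Fin d → ℝ) × Fin K) × Fin K × (Fin d → ℝ)) := {q | q.1 ∈ S ∧ q.2.1 ≠ q.1.2 ∧ q.2.2 ∈ B} with hSuppdef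
  have hSuppUnion : Supp = ⋃ t ∈ T, Cell t := by
    ext q
    simp only [hSuppdef, Set.mem_setOf_eq, Set.mem_iUnion, hCelldef]
    constructor
    · rintro ⟨h1, h2, h3⟩
      refine ⟨(q.1, q.2.1), ?_, rfl, rfl, h3⟩
      rw [hT, Finset.mem_filter, Finset.mem_product]
      exact ⟨⟨h1, Finset.mem_univ _⟩, h2⟩
    · rintro ⟨t, ht, h1, h2, h3⟩
      obtain ⟨hts, hty⟩ := hTmem t ht
      rw [h1, h2]
      exact ⟨hts, hty, h3⟩
  have hSuppMeas : MeasurableSet Supp := by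
    rw [hSuppUnion]; exact Finset.measurableSet_biUnion T (fun t _ => hCellmeas t)
  have hdisj : ∀ t₁ ∈ T, ∀ t₂ ∈ T, t₁ ≠ t₂ → Disjoint (Cell t₁) (Cell t₂) := by
    intro t₁ _ t₂ _ hne
    rw [Set.disjoint_left]
    rintro q ⟨h1, h2, _⟩ ⟨h3, h4, _⟩
    exact hne (Prod.ext (h1 ▸ h3) (h2 ▸ h4))
  have hSuppCompl : P' Suppᶜ = 0 := by
    rw [measure_compl hSuppMeas (measure_ne_top P' _), hsupp, measure_univ]
    simp
  -- decomposition of any set into cells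
  have hdecomp : ∀ A : Set (((Fin d → ℝ) × Fin K) × Fin K × (Fin d → ℝ)), (∀ t ∈ T, MeasurableSet (A ∩ Cell t)) →
      P' A = ∑ t ∈ T, P' (A ∩ Cell t) := by
    intro A hA
    have h1 : P' A = P' (A ∩ Supp) := by
      refine le_antisymm ?_ (measure_mono Set.inter_subset_left)
      calc P' A = P' ((A ∩ Supp) ∪ (A ∩ Suppᶜ)) := by
            rw [← Set.inter_union_distrib_left, Set.union_compl_self, Set.inter_univ]
        _ ≤ P' (A ∩ Supp) + P' (A ∩ Suppᶜ) := by exact measure_union_le _ _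
        _ ≤ P' (A ∩ Supp) + P' Suppᶜ :=
            add_le_add le_rfl (measure_mono Set.inter_subset_right)
        _ = P' (A ∩ Supp) := by rw [hSuppCompl, add_zero]
    have h2 : A ∩ Supp = ⋃ t ∈ T, (A ∩ Cell t) := by
      rw [hSuppUnion, Set.inter_iUnion₂]
    rw [h1, h2]
    exact measure_biUnion_finset
      (fun t₁ ht₁ t₂ ht₂ hne =>
        ((hdisj t₁ ht₁ t₂ ht₂ hne).mono Set.inter_subset_right Set.inter_subset_right)) hA
  -- the cell measures on ℝ^d
  set ν : (((Fin d → ℝ) × Fin K) × Fin K) → Measure (Fin d → ℝ) :=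
    fun t => (P'.restrict (Cell t)).map (fun q : (((Fin d → ℝ) × Fin K) × Fin K × (Fin d → ℝ)) => q.2.2) with hνdef
  have hν : ∀ t (D : Set (Fin d → ℝ)), MeasurableSet D →
      ν t D = P' ((fun q : (((Fin d → ℝ) × Fin K) × Fin K × (Fin d → ℝ)) => q.2.2) ⁻¹' D ∩ Cell t) := by
    intro t D hD
    rw [hνdef]
    rw [Measure.map_apply hproj hD, Measure.restrict_apply (hproj hD)]
  have hνfin : ∀ t, IsFiniteMeasure (ν t) := by
    intro t
    constructor
    rw [hν t Set.univ MeasurableSet.univ]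
    exact measure_lt_top P' _
  have hνB : ∀ t, ν t Bᶜ = 0 := by
    intro t
    rw [hν t Bᶜ hBmeas.compl]
    convert measure_empty (μ := P')
    ext q
    simp only [Set.mem_inter_iff, Set.mem_preimage, Set.mem_compl_iff, hCelldef,
      Set.mem_setOf_eq, Set.mem_empty_iff_false, iff_false, not_and]
    intro h1 _ _ h3
    exact h1 h3
  -- section measurability in δ-sets
  have hsec : ∀ (θ : Θ) (x : Fin d → ℝ) (j : Fin K),
      MeasurableSet {δ | c θ (x + δ) = j} := by
    intro θ x j
    exact measurable_prodMk_left (hc x j)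
  -- cell representation of correct/wrong sets
  have hcellc : ∀ (θ : Θ) (t : ((Fin d → ℝ) × Fin K) × Fin K),
      ({q : (((Fin d → ℝ) × Fin K) × Fin K × (Fin d → ℝ)) | c θ (q.1.1 + q.2.2) = q.1.2} ∩ Cell t) =
        ((fun q : (((Fin d → ℝ) × Fin K) × Fin K × (Fin d → ℝ)) => q.2.2) ⁻¹' {δ | c θ (t.1.1 + δ) = t.1.2}) ∩ Cell t := by
    intro θ t
    ext q
    simp only [Set.mem_inter_iff, Set.mem_setOf_eq, Set.mem_preimage]
    constructor
    · rintro ⟨h1, h2⟩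
      refine ⟨?_, h2⟩
      rw [← h2.1]
      exact h1
    · rintro ⟨h1, h2⟩
      refine ⟨?_, h2⟩
      rw [← h2.1] at h1
      exact h1
  have hcellw : ∀ (θ : Θ) (t : ((Fin d → ℝ) × Fin K) × Fin K),
      ({q : (((Fin d → ℝ) × Fin K) × Fin K × (Fin d → ℝ)) | c θ (q.1.1 + q.2.2) = q.2.1} ∩ Cell t) =
        ((fun q : (((Fin d → ℝ) × Fin K) × Fin K × (Fin d → ℝ)) => q.2.2) ⁻¹' {δ | c θ (t.1.1 + δ) = t.2}) ∩ Cell t := by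
    intro θ t
    ext q
    simp only [Set.mem_inter_iff, Set.mem_setOf_eq, Set.mem_preimage]
    constructor
    · rintro ⟨h1, h2⟩
      refine ⟨?_, h2⟩
      rw [← h2.1, ← h2.2.1]
      exact h1
    · rintro ⟨h1, h2⟩
      refine ⟨?_, h2⟩
      rw [← h2.1, ← h2.2.1] at h1
      exact h1
  -- the two ensemble functions
  set Fc : (((Fin d → ℝ) × Fin K) × Fin K) → Θ → ENNReal :=
    fun t θ => ν t {δ | c θ (t.1.1 + δ) = t.1.2} with hFcdef
  set Fw : (((Fin d → ℝ) × Fin K) × Fin K) → Θ → ENNReal :=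
    fun t θ => ν t {δ | c θ (t.1.1 + δ) = t.2} with hFwdef
  have hrepc : ∀ θ, P' {q : (((Fin d → ℝ) × Fin K) × Fin K × (Fin d → ℝ)) | c θ (q.1.1 + q.2.2) = q.1.2} = ∑ t ∈ T, Fc t θ := by
    intro θ
    rw [hdecomp _ (fun t ht => by
      rw [hcellc θ t]
      exact (hproj (hsec θ t.1.1 t.1.2)).inter (hCellmeas t))]
    refine Finset.sum_congr rfl (fun t ht => ?_)
    rw [hcellc θ t, hFcdef, ← hν t _ (hsec θ t.1.1 t.1.2)]
  have hrepw : ∀ θ, P' {q : (((Fin d → ℝ) × Fin K) × Fin K × (Fin d → ℝ)) | c θ (q.1.1 + q.2.2) = q.2.1} = ∑ t ∈ T, Fw t θ := by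
    intro θ
    rw [hdecomp _ (fun t ht => by
      rw [hcellw θ t]
      exact (hproj (hsec θ t.1.1 t.2)).inter (hCellmeas t))]
    refine Finset.sum_congr rfl (fun t ht => ?_)
    rw [hcellw θ t, hFwdef, ← hν t _ (hsec θ t.1.1 t.2)]
  -- measurability of Fc, Fw
  have hFmeas : ∀ (t : ((Fin d → ℝ) × Fin K) × Fin K) (j : Fin K),
      Measurable (fun θ => ν t {δ | c θ (t.1.1 + δ) = j}) := by
    intro t j
    haveI : IsFiniteMeasure (ν t) := hνfin t
    haveI : SFinite (ν t) := inferInstance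
    exact measurable_measure_prodMk_left (hc t.1.1 j)
  -- per-cell key inequality via Fubini
  have hkey : ∀ t ∈ T,
      ∫⁻ θ, Fw t θ ∂Q + ENNReal.ofReal τ * ν t Set.univ ≤ ∫⁻ θ, Fc t θ ∂Q := by
    intro t ht
    haveI : IsFiniteMeasure (ν t) := hνfin t
    haveI : SFinite (ν t) := inferInstance
    obtain ⟨htS, hty⟩ := hTmem t ht
    have hprodc : ∫⁻ θ, Fc t θ ∂Q
        = (Q.prod (ν t)) {p : Θ × (Fin d → ℝ) | c p.1 (t.1.1 + p.2) = t.1.2} :=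
      (Measure.prod_apply (hc t.1.1 t.1.2)).symm
    have hprodw : ∫⁻ θ, Fw t θ ∂Q
        = (Q.prod (ν t)) {p : Θ × (Fin d → ℝ) | c p.1 (t.1.1 + p.2) = t.2} :=
      (Measure.prod_apply (hc t.1.1 t.2)).symm
    rw [hprodc, hprodw, Measure.prod_apply_symm (hc t.1.1 t.1.2),
      Measure.prod_apply_symm (hc t.1.1 t.2)]
    have haeB : ∀ᵐ δ ∂(ν t), δ ∈ B := by
      rw [MeasureTheory.ae_iff]
      convert hνB t using 2
      rfl
    calc (∫⁻ δ, Q ((fun θ => (θ, δ)) ⁻¹' {p : Θ × (Fin d → ℝ) | c p.1 (t.1.1 + p.2) = t.2}) ∂ν t)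
          + ENNReal.ofReal τ * ν t Set.univ
        = ∫⁻ δ, (Q ((fun θ => (θ, δ)) ⁻¹' {p : Θ × (Fin d → ℝ) | c p.1 (t.1.1 + p.2) = t.2})
            + ENNReal.ofReal τ) ∂ν t := by
          rw [lintegral_add_right _ measurable_const, lintegral_const]
      _ ≤ ∫⁻ δ, Q ((fun θ => (θ, δ)) ⁻¹' {p : Θ × (Fin d → ℝ) | c p.1 (t.1.1 + p.2) = t.1.2}) ∂ν t := by
          refine lintegral_mono_ae (haeB.mono (fun δ hδ => ?_))
          have hQt := hQ t.1 htS δ hδ t.2 hty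
          have h1 : ((fun θ => (θ, δ)) ⁻¹' {p : Θ × (Fin d → ℝ) | c p.1 (t.1.1 + p.2) = t.2})
              = {θ | c θ (t.1.1 + δ) = t.2} := rfl
          have h2 : ((fun θ => (θ, δ)) ⁻¹' {p : Θ × (Fin d → ℝ) | c p.1 (t.1.1 + p.2) = t.1.2})
              = {θ | c θ (t.1.1 + δ) = t.1.2} := rfl
          rw [h1, h2]
          set a := Q {θ | c θ (t.1.1 + δ) = t.1.2} with ha
          set b := Q {θ | c θ (t.1.1 + δ) = t.2} with hb
          have hane : a ≠ ⊤ := measure_ne_top Q _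
          have hbne : b ≠ ⊤ := measure_ne_top Q _
          calc b + ENNReal.ofReal τ = ENNReal.ofReal (b.toReal + τ) := by
                rw [ENNReal.ofReal_add ENNReal.toReal_nonneg hτ.le, ENNReal.ofReal_toReal hbne]
            _ ≤ ENNReal.ofReal a.toReal := ENNReal.ofReal_le_ofReal (by linarith)
            _ = a := ENNReal.ofReal_toReal hane
  -- total mass of the cells
  have hmass : ∑ t ∈ T, ν t Set.univ = 1 := by
    have h1 : ∀ t ∈ T, ν t Set.univ = P' (Set.univ ∩ Cell t) := by
      intro t _
      rw [hν t Set.univ MeasurableSet.univ, Set.preimage_univ]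
    rw [Finset.sum_congr rfl h1, ← hdecomp Set.univ
      (fun t _ => by rw [Set.univ_inter]; exact hCellmeas t), measure_univ]
  -- total functions
  set f : Θ → ENNReal := fun θ => ∑ t ∈ T, Fc t θ with hfdef
  set g : Θ → ENNReal := fun θ => ∑ t ∈ T, Fw t θ with hgdef
  have hfmeas : Measurable f := Finset.measurable_sum T (fun t _ => hFmeas t t.1.2)
  have hgmeas : Measurable g := Finset.measurable_sum T (fun t _ => hFmeas t t.2)
  have hfle : ∀ θ, f θ ≤ 1 := by
    intro θ
    simp only [hfdef]
    rw [← hrepc θ]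
    exact prob_le_one
  have hgle : ∀ θ, g θ ≤ 1 := by
    intro θ
    simp only [hgdef]
    rw [← hrepw θ]
    exact prob_le_one
  have hint : ∫⁻ θ, g θ ∂Q + ENNReal.ofReal τ ≤ ∫⁻ θ, f θ ∂Q := by
    simp only [hfdef, hgdef]
    rw [lintegral_finset_sum T (fun t _ => hFmeas t t.1.2),
      lintegral_finset_sum T (fun t _ => hFmeas t t.2)]
    calc (∑ t ∈ T, ∫⁻ θ, Fw t θ ∂Q) + ENNReal.ofReal τ
        = ∑ t ∈ T, (∫⁻ θ, Fw t θ ∂Q + ENNReal.ofReal τ * ν t Set.univ) := by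
          rw [Finset.sum_add_distrib, ← Finset.mul_sum, hmass, mul_one]
      _ ≤ ∑ t ∈ T, ∫⁻ θ, Fc t θ ∂Q := Finset.sum_le_sum hkey
  -- conclude by contradiction
  by_contra hcon
  push_neg at hcon
  have hlt : ∀ θ, f θ < g θ + ENNReal.ofReal τ := by
    intro θ
    have h := hcon θ
    rw [hrepc θ, hrepw θ] at h
    have hgne : g θ ≠ ⊤ := (lt_of_le_of_lt (hgle θ) ENNReal.one_lt_top).ne
    have hfne : f θ ≠ ⊤ := (lt_of_le_of_lt (hfle θ) ENNReal.one_lt_top).ne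
    have hrhs : (g θ + ENNReal.ofReal τ).toReal = (g θ).toReal + τ := by
      rw [ENNReal.toReal_add hgne ENNReal.ofReal_ne_top, ENNReal.toReal_ofReal hτ.le]
    have : (f θ).toReal < (g θ + ENNReal.ofReal τ).toReal := by rw [hrhs]; linarith
    exact (ENNReal.toReal_lt_toReal hfne
      (ENNReal.add_ne_top.mpr ⟨hgne, ENNReal.ofReal_ne_top⟩)).mp this
  set h : Θ → ENNReal := fun θ => g θ + ENNReal.ofReal τ with hhdef
  have hhmeas : Measurable h := hgmeas.add measurable_const
  have hfleh : f ≤ᵐ[Q] h := Filter.Eventually.of_forall (fun θ => (hlt θ).le)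
  have hintf_ne : ∫⁻ θ, f θ ∂Q ≠ ⊤ := by
    refine (lt_of_le_of_lt ?_ ENNReal.one_lt_top).ne
    calc ∫⁻ θ, f θ ∂Q ≤ ∫⁻ _, 1 ∂Q := lintegral_mono hfle
      _ = 1 := by rw [lintegral_const, measure_univ, one_mul]
  have hsub : ∫⁻ θ, (h θ - f θ) ∂Q = ∫⁻ θ, h θ ∂Q - ∫⁻ θ, f θ ∂Q :=
    lintegral_sub hfmeas hintf_ne hfleh
  have hinth : ∫⁻ θ, h θ ∂Q = ∫⁻ θ, g θ ∂Q + ENNReal.ofReal τ := by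
    rw [hhdef, lintegral_add_right _ measurable_const, lintegral_const, measure_univ, mul_one]
  have hzero : ∫⁻ θ, (h θ - f θ) ∂Q = 0 := by
    rw [hsub, hinth]
    exact tsub_eq_zero_iff_le.mpr hint
  have hae := (lintegral_eq_zero_iff (hhmeas.sub hfmeas)).mp hzero
  haveI : (MeasureTheory.ae Q).NeBot := by
    rw [MeasureTheory.ae_neBot]
    intro h0
    have h1 := measure_univ (μ := Q)
    rw [h0] at h1
    simp at h1
  obtain ⟨θ, hθ⟩ := hae.exists
  simp only [Pi.zero_apply] at hθ
  have : h θ ≤ f θ := tsub_eq_zero_iff_le.mp hθ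
  exact absurd this (not_le.mpr (hlt θ))
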